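/- Generalized drift-plus-penalty theorem: Let Ψ(t) ≥ 0 and β(t) be stochastic processes with Ψ(0) finite almost surely. Let δ(t) = Ψ(t+1) − Ψ(t), and let H(t) be the history {Ψ(0),...,Ψ(t), β(0),...,β(t−1)}. Suppose E[δ(t)²] and E[β(t)²] are finite for all t, that ∑_{t=1}^∞ (E[δ(t)²] + E[β(t)²])/t² < ∞, and that E[δ(t) + β(t) | H(t)] ≤ 0 almost surely for all t. Then limsup_{t→∞} (1/t) ∑_{τ=0}^{t−1} β(τ) ≤ 0 with probability 1. -/

import Mathlib

open MeasureTheory ProbabilityTheory Filter Topology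
open scoped ENNReal NNReal

lemma kronecker_div_succ {a : ℕ → ℝ} {c : ℝ}
    (h : Tendsto (fun n : ℕ => ∑ k ∈ Finset.range n, ((k : ℝ) + 1)⁻¹ * a k) atTop (𝓝 c)) :
    Tendsto (fun n : ℕ => (∑ k ∈ Finset.range n, a k) / (n : ℝ)) atTop (𝓝 0) := by
  set S : ℕ → ℝ := fun n => ∑ k ∈ Finset.range n, ((k : ℝ) + 1)⁻¹ * a k with hS
  have key : ∀ n : ℕ, ∑ k ∈ Finset.range n, a k
      = (n : ℝ) * S n - ∑ k ∈ Finset.range n, S k := by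
    intro n
    induction n with
    | zero => simp [S]
    | succ n ih =>
      rw [Finset.sum_range_succ, ih, Finset.sum_range_succ (f := S)]
      have hSn : S (n + 1) = S n + ((n : ℝ) + 1)⁻¹ * a n := by
        simp [S, Finset.sum_range_succ]
      push_cast
      rw [hSn]
      have hne : ((n : ℝ) + 1) ≠ 0 := by positivity
      field_simp
      ring
  have h1 : Tendsto (fun n : ℕ => S n - (n : ℝ)⁻¹ * ∑ k ∈ Finset.range n, S k)
      atTop (𝓝 0) := by
    have := h.sub h.cesaro
    simpa using this
  refine h1.congr' ?_
  filter_upwards [eventually_ge_atTop 1] with n hn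
  have hn' : (n : ℝ) ≠ 0 := by
    have : (0 : ℝ) < n := by exact_mod_cast hn
    exact this.ne'
  rw [key n]
  field_simp

lemma memℒp_condexp_two {Ω : Type*} {m m0 : MeasurableSpace Ω} {μ : Measure Ω}
    [IsProbabilityMeasure μ] (hm : m ≤ m0) {f : Ω → ℝ} (hf : MemLp f 2 μ) :
    MemLp (μ[f|m]) 2 μ := by
  haveI : IsFiniteMeasure (μ.trim hm) := by
    constructor
    rw [trim_measurableSet_eq hm MeasurableSet.univ]
    exact measure_lt_top _ _
  have hcoe : (hf.toLp f : Ω → ℝ) =ᵐ[μ] f := hf.coeFn_toLp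
  have heq : ((condExpL2 ℝ ℝ hm (hf.toLp f) : Lp ℝ 2 μ) : Ω → ℝ) =ᵐ[μ] μ[f|m] := by
    refine ae_eq_condExp_of_forall_setIntegral_eq hm (hf.integrable one_le_two)
      (fun s hs hμs => integrableOn_condExpL2_of_measure_ne_top hm hμs.ne _)
      (fun s hs hμs => ?_) (aestronglyMeasurable_condExpL2 hm _)
    rw [integral_condExpL2_eq hm (hf.toLp f) hs hμs.ne]
    exact setIntegral_congr_ae (hm s hs) (hcoe.mono fun x hx _ => hx)
  exact (Lp.memLp _).ae_eq heq

lemma integral_add_sq_of_condexp_eq_zero {Ω : Type*} {m m0 : MeasurableSpace Ω}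
    {μ : Measure Ω} [IsProbabilityMeasure μ] (hm : m ≤ m0) {g D : Ω → ℝ}
    (hg : StronglyMeasurable[m] g) (hg2 : MemLp g 2 μ) (hD2 : MemLp D 2 μ)
    (hD : μ[D|m] =ᵐ[μ] 0) :
    ∫ ω, (g ω + D ω) ^ 2 ∂μ = (∫ ω, g ω ^ 2 ∂μ) + ∫ ω, D ω ^ 2 ∂μ := by
  haveI : IsFiniteMeasure (μ.trim hm) := by
    constructor
    rw [trim_measurableSet_eq hm MeasurableSet.univ]
    exact measure_lt_top _ _
  have hgD : Integrable (fun ω => g ω * D ω) μ := by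
    have h : MemLp (g • D) 1 μ := by
      haveI : ENNReal.HolderTriple 2 2 1 := ⟨by simp [ENNReal.inv_two_add_inv_two]⟩
      exact hD2.smul hg2
    rw [memLp_one_iff_integrable] at h
    exact h
  have hcross : ∫ ω, g ω * D ω ∂μ = 0 := by
    have h1 : μ[g * D|m] =ᵐ[μ] g * μ[D|m] :=
      condExp_mul_of_stronglyMeasurable_left hg hgD (hD2.integrable one_le_two)
    have h2 : g * μ[D|m] =ᵐ[μ] 0 := hD.mono fun ω hω => by
      simp only [Pi.mul_apply, Pi.zero_apply] at *
      rw [hω, mul_zero]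
    calc ∫ ω, g ω * D ω ∂μ = ∫ ω, (μ[g * D|m]) ω ∂μ :=
          (integral_condExp hm (f := g * D)).symm
      _ = ∫ ω, (0 : Ω → ℝ) ω ∂μ := integral_congr_ae (h1.trans h2)
      _ = 0 := by simp
  have hgsq := hg2.integrable_sq
  have hDsq := hD2.integrable_sq
  have hint1 : Integrable (fun ω => g ω ^ 2 + 2 * (g ω * D ω)) μ :=
    hgsq.add (hgD.const_mul 2)
  have hexp : ∀ ω, (g ω + D ω) ^ 2 = (g ω ^ 2 + 2 * (g ω * D ω)) + D ω ^ 2 :=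
    fun ω => by ring
  simp_rw [hexp]
  rw [integral_add hint1 hDsq, integral_add hgsq (hgD.const_mul 2),
    integral_const_mul, hcross]
  ring

lemma ae_tendsto_avg_sub_condexp {Ω : Type*} {m0 : MeasurableSpace Ω} {μ : Measure Ω}
    [IsProbabilityMeasure μ] (m : ℕ → MeasurableSpace Ω)
    (hle : ∀ t, m t ≤ m0) (hmono : Monotone m)
    (X : ℕ → Ω → ℝ) (hX2 : ∀ t, MemLp (X t) 2 μ)
    (hXsm : ∀ t, StronglyMeasurable[m (t + 1)] (X t))
    (hsum : Summable (fun t : ℕ => (∫ ω, X t ω ^ 2 ∂μ) / ((t : ℝ) + 1) ^ 2)) :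
    ∀ᵐ ω ∂μ, Tendsto
      (fun n : ℕ => (∑ k ∈ Finset.range n, (X k ω - (μ[X k|m k]) ω)) / (n : ℝ))
      atTop (𝓝 0) := by
  have hXint : ∀ t, Integrable (X t) μ := fun t => (hX2 t).integrable one_le_two
  set CX : ℕ → Ω → ℝ := fun t => μ[X t|m t] with hCX
  have hCX2 : ∀ t, MemLp (CX t) 2 μ := fun t => memℒp_condexp_two (hle t) (hX2 t)
  have hCXint : ∀ t, Integrable (CX t) μ := fun t => integrable_condExp
  have hCXsm : ∀ t, StronglyMeasurable[m t] (CX t) := fun t => stronglyMeasurable_condExp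
  set D : ℕ → Ω → ℝ := fun t ω => X t ω - CX t ω with hD
  have hD2 : ∀ t, MemLp (D t) 2 μ := fun t => (hX2 t).sub (hCX2 t)
  have hDint : ∀ t, Integrable (D t) μ := fun t => (hD2 t).integrable one_le_two
  have hDsm : ∀ t n, t < n → StronglyMeasurable[m n] (D t) := fun t n htn =>
    ((hXsm t).mono (hmono htn)).sub ((hCXsm t).mono (hmono htn.le))
  have hDcond : ∀ t, μ[D t|m t] =ᵐ[μ] 0 := by
    intro t
    have h1 : μ[X t - CX t|m t] =ᵐ[μ] μ[X t|m t] - μ[CX t|m t] :=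
      condExp_sub (hXint t) (hCXint t) (m t)
    have h2 : μ[CX t|m t] = CX t :=
      condExp_of_stronglyMeasurable (hle t) (hCXsm t) (hCXint t)
    have h3 : μ[D t|m t] =ᵐ[μ] μ[X t|m t] - μ[CX t|m t] := h1
    rw [h2] at h3
    refine h3.trans ?_
    have h4 : μ[X t|m t] - CX t = 0 := by
      funext ω; simp [hCX]
    rw [h4]
  set d : ℕ → Ω → ℝ := fun k ω => ((k : ℝ) + 1)⁻¹ * D k ω with hd
  have hd2 : ∀ k, MemLp (d k) 2 μ := fun k => (hD2 k).const_mul _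
  have hdint : ∀ k, Integrable (d k) μ := fun k => (hd2 k).integrable one_le_two
  have hdsm : ∀ k n, k < n → StronglyMeasurable[m n] (d k) := fun k n hkn =>
    ((hDsm k n hkn).const_mul _)
  have hdcond : ∀ k, μ[d k|m k] =ᵐ[μ] 0 := by
    intro k
    have h1 : μ[d k|m k] =ᵐ[μ] ((k : ℝ) + 1)⁻¹ • μ[D k|m k] := by
      have := condExp_smul (μ := μ) (m := m k) (((k : ℝ) + 1)⁻¹) (D k)
      refine (condExp_congr_ae ?_).trans this
      filter_upwards with ω
      simp [hd, smul_eq_mul]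
    refine h1.trans ?_
    filter_upwards [hDcond k] with ω hω
    simp only [Pi.smul_apply, Pi.zero_apply, smul_eq_mul] at *
    rw [hω, mul_zero]
  set N : ℕ → Ω → ℝ := fun n ω => ∑ k ∈ Finset.range n, d k ω with hN
  set ℱ : Filtration ℕ m0 := ⟨m, hmono, hle⟩ with hℱ
  have hNsucc : ∀ n, N (n + 1) = N n + d n := by
    intro n; funext ω
    show (∑ k ∈ Finset.range (n + 1), d k ω) = N n ω + d n ω
    rw [Finset.sum_range_succ]
  have hNsm : ∀ n, StronglyMeasurable[m n] (N n) := by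
    intro n
    refine Finset.stronglyMeasurable_fun_sum _ fun k hk => ?_
    exact hdsm k n (Finset.mem_range.1 hk)
  have hNint : ∀ n, Integrable (N n) μ := fun n =>
    integrable_finset_sum _ fun k _ => hdint k
  have hN2 : ∀ n, MemLp (N n) 2 μ := fun n =>
    memLp_finsetSum _ fun k _ => hd2 k
  have hmart : Martingale N ℱ μ := by
    refine martingale_nat (fun n => hNsm n) hNint fun n => ?_
    rw [hNsucc n]
    have h1 : μ[N n + d n|m n] =ᵐ[μ] μ[N n|m n] + μ[d n|m n] :=
      condExp_add (hNint n) (hdint n) (m n)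
    have h2 : μ[N n|m n] = N n :=
      condExp_of_stronglyMeasurable (hle n) (hNsm n) (hNint n)
    refine EventuallyEq.symm (h1.trans ?_)
    rw [h2]
    filter_upwards [hdcond n] with ω hω
    simp only [Pi.add_apply, Pi.zero_apply] at *
    rw [hω, add_zero]
  -- variance identity
  have hvar : ∀ n, ∫ ω, N n ω ^ 2 ∂μ = ∑ k ∈ Finset.range n, ∫ ω, d k ω ^ 2 ∂μ := by
    intro n
    induction n with
    | zero => simp [hN]
    | succ n ih =>
      rw [Finset.sum_range_succ, ← ih]
      have heq : ∀ ω, N (n + 1) ω = N n ω + d n ω := by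
        intro ω; rw [hNsucc n]; simp
      calc ∫ ω, N (n + 1) ω ^ 2 ∂μ = ∫ ω, (N n ω + d n ω) ^ 2 ∂μ := by
            refine integral_congr_ae ?_
            filter_upwards with ω
            rw [heq ω]
        _ = (∫ ω, N n ω ^ 2 ∂μ) + ∫ ω, d n ω ^ 2 ∂μ :=
            integral_add_sq_of_condexp_eq_zero (hle n) (hNsm n) (hN2 n) (hd2 n) (hdcond n)
  -- bounding the variance sum
  have hDXsq : ∀ k, ∫ ω, D k ω ^ 2 ∂μ ≤ ∫ ω, X k ω ^ 2 ∂μ := by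
    intro k
    have hpyth : ∫ ω, X k ω ^ 2 ∂μ = (∫ ω, CX k ω ^ 2 ∂μ) + ∫ ω, D k ω ^ 2 ∂μ := by
      have h1 : ∫ ω, X k ω ^ 2 ∂μ = ∫ ω, (CX k ω + D k ω) ^ 2 ∂μ := by
        refine integral_congr_ae ?_
        filter_upwards with ω
        simp [hD]
      rw [h1]
      exact integral_add_sq_of_condexp_eq_zero (hle k) (hCXsm k) (hCX2 k) (hD2 k) (hDcond k)
    have h2 : 0 ≤ ∫ ω, CX k ω ^ 2 ∂μ := integral_nonneg fun ω => sq_nonneg _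
    linarith
  have hdsq_eq : ∀ k, ∫ ω, d k ω ^ 2 ∂μ = (((k : ℝ) + 1)⁻¹) ^ 2 * ∫ ω, D k ω ^ 2 ∂μ := by
    intro k
    rw [← integral_const_mul]
    refine integral_congr_ae ?_
    filter_upwards with ω
    simp only [hd]
    ring
  have hesummable : Summable (fun k : ℕ => ∫ ω, d k ω ^ 2 ∂μ) := by
    refine Summable.of_nonneg_of_le (fun k => integral_nonneg fun ω => sq_nonneg _)
      (fun k => ?_) hsum
    rw [hdsq_eq k]
    have hh : (∫ ω, X k ω ^ 2 ∂μ) / ((k : ℝ) + 1) ^ 2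
        = (((k : ℝ) + 1)⁻¹) ^ 2 * ∫ ω, X k ω ^ 2 ∂μ := by
      rw [div_eq_mul_inv, ← inv_pow, mul_comm]
    rw [hh]
    exact mul_le_mul_of_nonneg_left (hDXsq k) (by positivity)
  set C : ℝ := ∑' k, ∫ ω, d k ω ^ 2 ∂μ with hC
  have hNbd : ∀ n, ∫ ω, N n ω ^ 2 ∂μ ≤ C := by
    intro n
    rw [hvar n]
    exact Summable.sum_le_tsum _ (fun k _ => integral_nonneg fun ω => sq_nonneg _) hesummable
  have hC0 : 0 ≤ C := tsum_nonneg fun k => integral_nonneg fun ω => sq_nonneg _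
  -- L1 bound
  have hbdd : ∀ n, eLpNorm (N n) 1 μ ≤ ((1 + C).toNNReal : ℝ≥0∞) := by
    intro n
    rw [eLpNorm_one_eq_lintegral_enorm,
      ← ofReal_integral_norm_eq_lintegral_enorm (hNint n)]
    have h1 : ∫ ω, ‖N n ω‖ ∂μ ≤ 1 + C := by
      have h2 : ∫ ω, ‖N n ω‖ ∂μ ≤ ∫ ω, 1 + N n ω ^ 2 ∂μ := by
        refine integral_mono (hNint n).norm ((integrable_const 1).add (hN2 n).integrable_sq) ?_
        intro ω
        have := sq_nonneg (|N n ω| - 1)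
        simp only [Real.norm_eq_abs]
        nlinarith [sq_abs (N n ω), abs_nonneg (N n ω)]
      have h3 : ∫ ω, 1 + N n ω ^ 2 ∂μ = 1 + ∫ ω, N n ω ^ 2 ∂μ := by
        rw [integral_add (integrable_const 1) (hN2 n).integrable_sq, integral_const]
        simp
      rw [h3] at h2
      linarith [hNbd n]
    calc ENNReal.ofReal (∫ ω, ‖N n ω‖ ∂μ) ≤ ENNReal.ofReal (1 + C) :=
          ENNReal.ofReal_le_ofReal h1
      _ = ((1 + C).toNNReal : ℝ≥0∞) := rfl
  have hconv := hmart.submartingale.ae_tendsto_limitProcess hbdd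
  filter_upwards [hconv] with ω hω
  have hk : Tendsto (fun n : ℕ => (∑ k ∈ Finset.range n, D k ω) / (n : ℝ)) atTop (𝓝 0) := by
    refine kronecker_div_succ (c := ℱ.limitProcess N μ ω) ?_
    refine hω.congr ?_
    intro n
    simp [hN, hd]
  refine hk.congr ?_
  intro n
  rfl

/-- The history σ-algebra `H(t)` generated by `Ψ(0), ..., Ψ(t)` and `β(0), ..., β(t-1)`. -/
def genHist {Ω : Type*} [MeasurableSpace Ω] (Ψ β : ℕ → Ω → ℝ) (t : ℕ) : MeasurableSpace Ω :=
  (⨆ i ∈ Finset.range (t + 1), MeasurableSpace.comap (Ψ i) inferInstance) ⊔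
    (⨆ i ∈ Finset.range t, MeasurableSpace.comap (β i) inferInstance)

/-- Generalized drift-plus-penalty: if `Ψ ≥ 0`, the second moments of
`δ(t) = Ψ(t+1) - Ψ(t)` and of `β(t)` are finite with
`∑ₜ (E[δ(t)²] + E[β(t)²])/t² < ∞`, and `E[δ(t) + β(t) | H(t)] ≤ 0` a.s. for all `t`,
then `limsup (1/t) ∑_{τ<t} β(τ) ≤ 0` with probability 1. -/
theorem generalized_drift_plus_penalty
    {Ω : Type*} [MeasureSpace Ω] [IsProbabilityMeasure (ℙ : Measure Ω)]
    (Ψ β : ℕ → Ω → ℝ)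
    (hΨm : ∀ t, Measurable (Ψ t)) (hβm : ∀ t, Measurable (β t))
    (hΨpos : ∀ t ω, 0 ≤ Ψ t ω)
    (hδint : ∀ t, Integrable (fun ω => Ψ (t + 1) ω - Ψ t ω) ℙ)
    (hβint : ∀ t, Integrable (β t) ℙ)
    (hδ2 : ∀ t, Integrable (fun ω => (Ψ (t + 1) ω - Ψ t ω) ^ 2) ℙ)
    (hβ2 : ∀ t, Integrable (fun ω => (β t ω) ^ 2) ℙ)
    (hsum : Summable (fun t : ℕ =>
      ((∫ ω, (Ψ (t + 1) ω - Ψ t ω) ^ 2 ∂(ℙ : Measure Ω)) +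
        ∫ ω, (β t ω) ^ 2 ∂(ℙ : Measure Ω)) / (t : ℝ) ^ 2))
    (hdrift : ∀ t, ∀ᵐ ω ∂(ℙ : Measure Ω),
      ((ℙ : Measure Ω)[fun ω' => (Ψ (t + 1) ω' - Ψ t ω') + β t ω' | genHist Ψ β t]) ω ≤ 0) :
    ∀ᵐ ω ∂(ℙ : Measure Ω),
      Filter.limsup
        (fun t : ℕ => (((∑ τ ∈ Finset.range t, β τ ω) / (t : ℝ) : ℝ) : EReal)) atTop
      ≤ (0 : EReal) := by
  have hgen_le : ∀ t, genHist Ψ β t ≤ (inferInstance : MeasurableSpace Ω) := by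
    intro t
    unfold genHist
    exact sup_le (iSup₂_le fun i _ => (hΨm i).comap_le)
      (iSup₂_le fun i _ => (hβm i).comap_le)
  have hgen_mono : Monotone (genHist Ψ β) := by
    intro s t hst
    unfold genHist
    refine sup_le_sup (biSup_mono fun i hi => ?_) (biSup_mono fun i hi => ?_)
    · exact Finset.mem_range.2 ((Finset.mem_range.1 hi).trans_le (by omega))
    · exact Finset.mem_range.2 ((Finset.mem_range.1 hi).trans_le hst)
  have hΨmeas : ∀ i t, i ≤ t → Measurable[genHist Ψ β t] (Ψ i) := by
    intro i t h
    rw [measurable_iff_comap_le]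
    unfold genHist
    exact le_trans
      (le_iSup₂ (f := fun i (_ : i ∈ Finset.range (t + 1)) =>
        MeasurableSpace.comap (Ψ i) inferInstance) i
        (Finset.mem_range.2 (Nat.lt_succ_of_le h))) le_sup_left
  have hβmeas : ∀ i t, i < t → Measurable[genHist Ψ β t] (β i) := by
    intro i t h
    rw [measurable_iff_comap_le]
    unfold genHist
    exact le_trans
      (le_iSup₂ (f := fun i (_ : i ∈ Finset.range t) =>
        MeasurableSpace.comap (β i) inferInstance) i
        (Finset.mem_range.2 h)) le_sup_right
  set X : ℕ → Ω → ℝ := fun t ω => (Ψ (t + 1) ω - Ψ t ω) + β t ω with hX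
  have hXsm : ∀ t, StronglyMeasurable[genHist Ψ β (t + 1)] (X t) := by
    intro t
    have : Measurable[genHist Ψ β (t + 1)] (X t) :=
      ((hΨmeas (t + 1) (t + 1) le_rfl).sub (hΨmeas t (t + 1) (by omega))).add
        (hβmeas t (t + 1) (by omega))
    exact this.stronglyMeasurable
  have hδ2' : ∀ t, MemLp (fun ω => Ψ (t + 1) ω - Ψ t ω) 2 (ℙ : Measure Ω) := fun t =>
    (memLp_two_iff_integrable_sq
      (((hΨm (t + 1)).sub (hΨm t)).aestronglyMeasurable)).2 (hδ2 t)
  have hβ2' : ∀ t, MemLp (β t) 2 (ℙ : Measure Ω) := fun t =>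
    (memLp_two_iff_integrable_sq (hβm t).aestronglyMeasurable).2 (hβ2 t)
  have hX2 : ∀ t, MemLp (X t) 2 (ℙ : Measure Ω) := fun t => (hδ2' t).add (hβ2' t)
  have hXsq_le : ∀ t, ∫ ω, X t ω ^ 2 ∂(ℙ : Measure Ω)
      ≤ 2 * ((∫ ω, (Ψ (t + 1) ω - Ψ t ω) ^ 2 ∂(ℙ : Measure Ω)) +
          ∫ ω, (β t ω) ^ 2 ∂(ℙ : Measure Ω)) := by
    intro t
    have hint2 : Integrable
        (fun ω => 2 * (Ψ (t + 1) ω - Ψ t ω) ^ 2 + 2 * β t ω ^ 2) (ℙ : Measure Ω) :=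
      ((hδ2 t).const_mul 2).add ((hβ2 t).const_mul 2)
    have hmono2 := integral_mono ((hX2 t).integrable_sq) hint2
      (fun ω => by
        simp only [hX]
        nlinarith [sq_nonneg ((Ψ (t + 1) ω - Ψ t ω) - β t ω)])
    rw [integral_add ((hδ2 t).const_mul 2) ((hβ2 t).const_mul 2),
      integral_const_mul, integral_const_mul] at hmono2
    linarith
  have hXsq0 : ∀ t, 0 ≤ ∫ ω, X t ω ^ 2 ∂(ℙ : Measure Ω) := fun t =>
    integral_nonneg fun ω => sq_nonneg _
  have hsum' : Summable (fun t : ℕ =>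
      (∫ ω, X t ω ^ 2 ∂(ℙ : Measure Ω)) / ((t : ℝ) + 1) ^ 2) := by
    rw [← summable_nat_add_iff 1]
    refine Summable.of_nonneg_of_le (fun n => by positivity) (fun n => ?_)
      (((summable_nat_add_iff 1).mpr hsum).mul_left 2)
    have hA := hXsq_le (n + 1)
    have hB : (0 : ℝ) ≤ (∫ ω, (Ψ (n + 1 + 1) ω - Ψ (n + 1) ω) ^ 2 ∂(ℙ : Measure Ω)) +
        ∫ ω, (β (n + 1) ω) ^ 2 ∂(ℙ : Measure Ω) :=
      add_nonneg (integral_nonneg fun ω => sq_nonneg _)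
        (integral_nonneg fun ω => sq_nonneg _)
    push_cast
    rw [← mul_div_assoc]
    refine div_le_div₀ (by linarith) hA (by positivity) (by nlinarith [Nat.cast_nonneg (α := ℝ) n])
  have hmain := ae_tendsto_avg_sub_condexp (μ := (ℙ : Measure Ω)) (genHist Ψ β)
    hgen_le hgen_mono X hX2 hXsm hsum'
  have hdriftall : ∀ᵐ ω ∂(ℙ : Measure Ω),
      ∀ t, ((ℙ : Measure Ω)[X t|genHist Ψ β t]) ω ≤ 0 := by
    rw [ae_all_iff]
    intro t
    exact hdrift t
  filter_upwards [hmain, hdriftall] with ω hN hC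
  have key : ∀ t : ℕ, (∑ τ ∈ Finset.range t, β τ ω)
      ≤ (∑ k ∈ Finset.range t,
          (X k ω - ((ℙ : Measure Ω)[X k|genHist Ψ β k]) ω)) + Ψ 0 ω := by
    intro t
    have h1 : ∑ τ ∈ Finset.range t, β τ ω
        = (∑ τ ∈ Finset.range t, X τ ω) - (Ψ t ω - Ψ 0 ω) := by
      have hpt : ∀ τ, β τ ω = X τ ω - (Ψ (τ + 1) ω - Ψ τ ω) := fun τ => by
        simp only [hX]; ring
      calc ∑ τ ∈ Finset.range t, β τ ω
          = ∑ τ ∈ Finset.range t, (X τ ω - (Ψ (τ + 1) ω - Ψ τ ω)) :=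
            Finset.sum_congr rfl fun τ _ => hpt τ
        _ = (∑ τ ∈ Finset.range t, X τ ω)
            - ∑ τ ∈ Finset.range t, (Ψ (τ + 1) ω - Ψ τ ω) := Finset.sum_sub_distrib _ _
        _ = _ := by rw [Finset.sum_range_sub (fun i => Ψ i ω)]
    have h2 : ∑ τ ∈ Finset.range t, X τ ω
        ≤ ∑ k ∈ Finset.range t,
            (X k ω - ((ℙ : Measure Ω)[X k|genHist Ψ β k]) ω) :=
      Finset.sum_le_sum fun τ _ => by have := hC τ; linarith
    have h3 : 0 ≤ Ψ t ω := hΨpos t ω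
    linarith
  set u : ℕ → ℝ := fun t => (∑ k ∈ Finset.range t,
      (X k ω - ((ℙ : Measure Ω)[X k|genHist Ψ β k]) ω)) / (t : ℝ) + Ψ 0 ω / (t : ℝ)
    with hu
  have hψ0 : Tendsto (fun t : ℕ => Ψ 0 ω / (t : ℝ)) atTop (𝓝 0) :=
    tendsto_const_div_atTop_nhds_zero_nat _
  have hut : Tendsto u atTop (𝓝 0) := by
    have h := hN.add hψ0
    rw [add_zero] at h
    exact h
  have hle2 : ∀ t : ℕ, (∑ τ ∈ Finset.range t, β τ ω) / (t : ℝ) ≤ u t := by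
    intro t
    rcases Nat.eq_zero_or_pos t with h0 | hpos
    · subst h0; simp [hu]
    · have ht : (0 : ℝ) < t := by exact_mod_cast hpos
      rw [hu]
      simp only
      rw [← add_div]
      exact div_le_div_of_nonneg_right (key t) ht.le
  calc limsup (fun t : ℕ =>
        (((∑ τ ∈ Finset.range t, β τ ω) / (t : ℝ) : ℝ) : EReal)) atTop
      ≤ limsup (fun t : ℕ => ((u t : ℝ) : EReal)) atTop :=
        limsup_le_limsup (Eventually.of_forall fun t => EReal.coe_le_coe_iff.2 (hle2 t))
    _ = ((0 : ℝ) : EReal) := by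
        refine Tendsto.limsup_eq ?_
        exact (EReal.tendsto_coe).2 hut
    _ = (0 : EReal) := by norm_num
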